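/- Let A_0, A_1, ..., A_{t-1} be topical operators on R^d, and suppose the product A_{n-1}⋯A_1 has rank 1 for some n ≤ t. Then max_i(A_{t-1}⋯A_0 0)_i − max_i(A_{t-1}⋯A_1 0)_i = max_i(A_{n-1}⋯A_0 0)_i − max_i(A_{n-1}⋯A_1 0)_i. -/
import Mathlib


/-- A map on `ℝ^d` is *topical* if it is isotone and additively homogeneous. -/
def Topical (d : ℕ) (A : (Fin d → ℝ) → (Fin d → ℝ)) : Prop :=
  (∀ x y : Fin d → ℝ, x ≤ y → A x ≤ A y) ∧
  (∀ (x : Fin d → ℝ) (a : ℝ), A (x + fun _ => a) = A x + fun _ => a)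

/-- `compOp A s n = A_{s+n-1} ∘ ⋯ ∘ A_s`. -/
def compOp {d : ℕ} (A : ℕ → (Fin d → ℝ) → (Fin d → ℝ)) (s : ℕ) :
    ℕ → (Fin d → ℝ) → (Fin d → ℝ)
  | 0 => id
  | n + 1 => A (s + n) ∘ compOp A s n

/-- `θ` has rank 1: the induced map on `ℝ^d / ℝ·1` is constant. -/
def Rank1 (d : ℕ) (θ : (Fin d → ℝ) → (Fin d → ℝ)) : Prop :=
  ∀ x y : Fin d → ℝ, ∃ a : ℝ, θ x = θ y + fun _ => a

/-- If `A_{n-1}⋯A_1` has rank 1 for some `n ≤ t`, then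
`max_i(A_{t-1}⋯A_0 0)_i - max_i(A_{t-1}⋯A_1 0)_i
  = max_i(A_{n-1}⋯A_0 0)_i - max_i(A_{n-1}⋯A_1 0)_i`. -/

lemma compOp_hom {d : ℕ} (A : ℕ → (Fin d → ℝ) → (Fin d → ℝ)) (hA : ∀ k, Topical d (A k))
    (s m : ℕ) (x : Fin d → ℝ) (a : ℝ) :
    compOp A s m (x + fun _ => a) = compOp A s m x + fun _ => a := by
  induction m with
  | zero => rfl
  | succ m ih => simp [compOp, ih, (hA (s + m)).2]

lemma compOp_split {d : ℕ} (A : ℕ → (Fin d → ℝ) → (Fin d → ℝ)) (s m k : ℕ) :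
    compOp A s (m + k) = compOp A (s + m) k ∘ compOp A s m := by
  induction k with
  | zero => rfl
  | succ k ih =>
    show compOp A s (m + k + 1) = _
    show A (s + (m + k)) ∘ compOp A s (m + k) = (A (s + m + k) ∘ compOp A (s + m) k) ∘ compOp A s m
    rw [ih, ← add_assoc, Function.comp_assoc]

lemma ciSup_add_const {d : ℕ} [NeZero d] (x : Fin d → ℝ) (a : ℝ) :
    (⨆ i, (x i + a)) = (⨆ i, x i) + a := by
  have : Nonempty (Fin d) := ⟨⟨0, Nat.pos_of_ne_zero (NeZero.ne d)⟩⟩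
  exact (ciSup_add (Set.Finite.bddAbove (Set.finite_range x)) a).symm

theorem memory_loss_difference {d : ℕ} [NeZero d]
    (A : ℕ → (Fin d → ℝ) → (Fin d → ℝ)) (hA : ∀ k, Topical d (A k))
    (n t : ℕ) (hn : 1 ≤ n) (hnt : n ≤ t)
    (hrk : Rank1 d (compOp A 1 (n - 1))) :
    (⨆ i, compOp A 0 t 0 i) - (⨆ i, compOp A 1 (t - 1) 0 i) =
      (⨆ i, compOp A 0 n 0 i) - (⨆ i, compOp A 1 (n - 1) 0 i) := by
  obtain ⟨a, ha⟩ := hrk (A 0 0) 0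
  have h1 : compOp A 0 n 0 = compOp A 1 (n - 1) 0 + fun _ => a := by
    have : compOp A 0 n = compOp A 1 (n - 1) ∘ compOp A 0 1 := by
      have := compOp_split A 0 1 (n - 1)
      rwa [Nat.add_sub_cancel' hn] at this
    rw [this]
    simpa [compOp] using ha
  have h2 : compOp A 0 t 0 = compOp A 1 (t - 1) 0 + fun _ => a := by
    have e1 : compOp A 0 t = compOp A n (t - n) ∘ compOp A 0 n := by
      have := compOp_split A 0 n (t - n)
      rwa [Nat.add_sub_cancel' hnt, Nat.zero_add] at this
    have e2 : compOp A 1 (t - 1) = compOp A n (t - n) ∘ compOp A 1 (n - 1) := by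
      have := compOp_split A 1 (n - 1) (t - n)
      rw [Nat.add_sub_cancel' hn] at this
      rwa [show n - 1 + (t - n) = t - 1 by omega] at this
    rw [e1, e2]
    simp only [Function.comp_apply, h1]
    exact compOp_hom A hA n (t - n) _ a
  rw [h1, h2]
  simp only [Pi.add_apply]
  rw [ciSup_add_const, ciSup_add_const]
  ring
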